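/- Let H be a complex separable infinite-dimensional Hilbert space and let φ : B(H) → B(H) be a *-semigroup endomorphism which is uniformly continuous on every commutative C*-subalgebra, with φ(0) = 0 and φ(I) = I. Then for every projection P ∈ B(H), φ(P) + φ(I − P) = I. -/

import Mathlib

set_option maxHeartbeats 1000000 in
theorem stmt15 (H : Type*) [NormedAddCommGroup H] [InnerProductSpace ℂ H]
    [CompleteSpace H] [TopologicalSpace.SeparableSpace H]
    (hinf : ¬ FiniteDimensional ℂ H)
    (φ : (H →L[ℂ] H) → (H →L[ℂ] H))
    (hmul : ∀ A B : H →L[ℂ] H, φ (A * B) = φ A * φ B)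
    (hstar : ∀ A : H →L[ℂ] H, φ (star A) = star (φ A))
    (hcont : ∀ S : StarSubalgebra ℂ (H →L[ℂ] H), IsClosed (S : Set (H →L[ℂ] H)) →
      (∀ a ∈ S, ∀ b ∈ S, a * b = b * a) → UniformContinuousOn φ (S : Set (H →L[ℂ] H)))
    (h0 : φ 0 = 0) (h1 : φ 1 = 1) :
    ∀ P : H →L[ℂ] H, IsSelfAdjoint P → IsIdempotentElem P →
      φ P + φ (1 - P) = 1 := by
  intro P hsa hidem
  classical
  have hPP : P * P = P := hidem
  have hPstar : star P = P := hsa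
  have hP1 : P * (1 - P) = 0 := by rw [mul_sub, mul_one, hPP, sub_self]
  have h1P : (1 - P) * P = 0 := by rw [sub_mul, one_mul, hPP, sub_self]
  have h11 : (1 - P) * (1 - P) = (1 - P) := by
    rw [sub_mul, one_mul, mul_sub, mul_one, hPP, sub_self, sub_zero]
  have hkey : ∀ a b c d : ℂ,
      (a • P + b • (1 - P)) * (c • P + d • (1 - P)) = (a * c) • P + (b * d) • (1 - P) := by
    intro a b c d
    rw [add_mul, mul_add, mul_add, smul_mul_smul_comm, smul_mul_smul_comm,
      smul_mul_smul_comm, smul_mul_smul_comm, hPP, hP1, h1P, h11, smul_zero, smul_zero]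
    abel
  -- the commutative star subalgebra spanned by P and 1 - P
  let S : StarSubalgebra ℂ (H →L[ℂ] H) :=
    { carrier := {A | ∃ a b : ℂ, A = a • P + b • (1 - P)}
      mul_mem' := by
        rintro x y ⟨a, b, rfl⟩ ⟨c, d, rfl⟩
        exact ⟨a * c, b * d, hkey a b c d⟩
      one_mem' := ⟨1, 1, by simp⟩
      add_mem' := by
        rintro x y ⟨a, b, rfl⟩ ⟨c, d, rfl⟩
        exact ⟨a + c, b + d, by rw [add_smul, add_smul]; abel⟩
      zero_mem' := ⟨0, 0, by simp⟩
      algebraMap_mem' := by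
        intro c
        refine ⟨c, c, ?_⟩
        rw [Algebra.algebraMap_eq_smul_one, smul_sub]
        abel
      star_mem' := by
        rintro x ⟨a, b, rfl⟩
        refine ⟨starRingEnd ℂ a, starRingEnd ℂ b, ?_⟩
        simp [star_smul, star_sub, hPstar] }
  have hmemS : ∀ a b : ℂ, (a • P + b • (1 - P)) ∈ S := fun a b => ⟨a, b, rfl⟩
  have hSclosed : IsClosed (S : Set (H →L[ℂ] H)) := by
    have hset : (S : Set (H →L[ℂ] H)) =
        (Submodule.span ℂ ({P, 1 - P} : Set (H →L[ℂ] H)) : Set (H →L[ℂ] H)) := by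
      ext x
      constructor
      · rintro ⟨a, b, rfl⟩
        exact Submodule.mem_span_pair.mpr ⟨a, b, rfl⟩
      · intro hx
        obtain ⟨a, b, hab⟩ := Submodule.mem_span_pair.mp hx
        exact ⟨a, b, hab.symm⟩
    rw [hset]
    haveI : FiniteDimensional ℂ (Submodule.span ℂ ({P, 1 - P} : Set (H →L[ℂ] H))) :=
      FiniteDimensional.span_of_finite ℂ (Set.toFinite _)
    exact Submodule.closed_of_finiteDimensional _
  have hScomm : ∀ x ∈ S, ∀ y ∈ S, x * y = y * x := by
    rintro x ⟨a, b, rfl⟩ y ⟨c, d, rfl⟩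
    rw [hkey, hkey, mul_comm c a, mul_comm d b]
  have hUC := hcont S hSclosed hScomm
  rw [Metric.uniformContinuousOn_iff] at hUC
  -- the map ψ
  set ψ : ℂ → ℂ → (H →L[ℂ] H) := fun a b => φ (a • P + b • (1 - P)) with hψdef
  have hψm : ∀ a b c d : ℂ, ψ a b * ψ c d = ψ (a * c) (b * d) := by
    intro a b c d
    simp only [hψdef]
    rw [← hmul, hkey]
  have hUCψ : ∀ ε > (0:ℝ), ∃ δ > (0:ℝ), ∀ a b c d : ℂ,
      ‖(a • P + b • (1 - P)) - (c • P + d • (1 - P))‖ < δ → ‖ψ a b - ψ c d‖ < ε := by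
    intro ε hε
    obtain ⟨δ, hδ, hd⟩ := hUC ε hε
    refine ⟨δ, hδ, fun a b c d hlt => ?_⟩
    have := hd _ (hmemS a b) _ (hmemS c d) (by rwa [dist_eq_norm])
    rwa [dist_eq_norm] at this
  have hψ10 : ψ 1 0 = φ P := by simp [hψdef]
  have hψ01 : ψ 0 1 = φ (1 - P) := by simp [hψdef]
  have hψ11 : ψ 1 1 = 1 := by
    have : (1:ℂ) • P + (1:ℂ) • (1 - P) = 1 := by simp
    simp only [hψdef, this, h1]
  have hψ00 : ψ 0 0 = 0 := by simp [hψdef, h0]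
  set Q := ψ 1 0 with hQdef
  set R := ψ 0 1 with hRdef
  have hQQ : Q * Q = Q := by rw [hQdef, hψm]; norm_num
  have hRR : R * R = R := by rw [hRdef, hψm]; norm_num
  have hQR : Q * R = 0 := by rw [hQdef, hRdef, hψm]; simpa using hψ00
  have hRQ : R * Q = 0 := by rw [hQdef, hRdef, hψm]; simpa using hψ00
  have hQψ : ∀ a b : ℂ, Q * ψ a b = ψ a b * Q := by
    intro a b; rw [hQdef, hψm, hψm]; norm_num
  have hRψ : ∀ a b : ℂ, R * ψ a b = ψ a b * R := by
    intro a b; rw [hRdef, hψm, hψm]; norm_num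
  have hQstar : star Q = Q := by rw [hψ10, ← hstar, hPstar]
  have hRstar : star R = R := by
    rw [hψ01, ← hstar]
    congr 1
    rw [star_sub, star_one, hPstar]
  set E : H →L[ℂ] H := 1 - Q - R with hEdef
  have hEψ : ∀ a b : ℂ, E * ψ a b = ψ a b * E := by
    intro a b
    rw [hEdef, sub_mul, sub_mul, one_mul, mul_sub, mul_sub, mul_one, hQψ, hRψ]
  have hEE : E * E = E := by
    rw [hEdef]
    have expand : (1 - Q - R) * (1 - Q - R)
        = 1 - Q - R - (Q - Q * Q - Q * R) - (R - R * Q - R * R) := by noncomm_ring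
    rw [expand, hQQ, hQR, hRQ, hRR]
    abel
  have hEstar : star E = E := by
    rw [hEdef]
    simp [star_sub, hQstar, hRstar]
  have hnE : ‖E‖ ≤ 1 := by
    rcases eq_or_ne E 0 with h | h
    · simp [h]
    · have h2 : ‖E‖ * ‖E‖ = ‖E‖ := by
        calc ‖E‖ * ‖E‖ = ‖star E * E‖ := (CStarRing.norm_star_mul_self).symm
          _ = ‖E‖ := by rw [hEstar, hEE]
      have hpos : 0 < ‖E‖ := norm_pos_iff.mpr h
      nlinarith
  have hQE : Q * E = 0 := by
    rw [hEdef, mul_sub, mul_sub, mul_one, hQQ, hQR, sub_zero, sub_self]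
  have hRE : R * E = 0 := by
    rw [hEdef, mul_sub, mul_sub, mul_one, hRQ, hRR, sub_zero, sub_self]
  -- the corner maps
  set f : ℂ → (H →L[ℂ] H) := fun a => ψ a 1 * E with hfdef
  set g : ℂ → (H →L[ℂ] H) := fun b => ψ 1 b * E with hgdef
  have hEX : ∀ a b : ℂ, E * (ψ a b * E) = ψ a b * E := by
    intro a b
    rw [← mul_assoc, hEψ, mul_assoc, hEE]
  have hXE : ∀ a b : ℂ, (ψ a b * E) * E = ψ a b * E := by
    intro a b
    rw [mul_assoc, hEE]
  have hfmul : ∀ a c : ℂ, f a * f c = f (a * c) := by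
    intro a c
    simp only [hfdef]
    rw [mul_assoc, hEX, ← mul_assoc, hψm]
    norm_num
  have hgmul : ∀ b d : ℂ, g b * g d = g (b * d) := by
    intro b d
    simp only [hgdef]
    rw [mul_assoc, hEX, ← mul_assoc, hψm]
    norm_num
  have hfg : ∀ a b : ℂ, f a * g b = ψ a b * E := by
    intro a b
    simp only [hfdef, hgdef]
    rw [mul_assoc, hEX, ← mul_assoc, hψm]
    norm_num
  have hf1 : f 1 = E := by
    simp only [hfdef]
    rw [hψ11, one_mul]
  have hg1 : g 1 = E := by
    simp only [hgdef]
    rw [hψ11, one_mul]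
  have hgpow : ∀ (b : ℂ) (n : ℕ), g (b ^ (n + 1)) = (g b) ^ (n + 1) := by
    intro b n
    induction n with
    | zero => simp
    | succ m ih =>
      have : b ^ (m + 2) = b ^ (m + 1) * b := by ring
      rw [this, ← hgmul, ih, ← pow_succ]
  have hEpow : ∀ n : ℕ, E ^ (n + 1) = E := by
    intro n
    induction n with
    | zero => simp
    | succ m ih => rw [pow_succ, ih, hEE]
  -- difference computations
  have hdiff1 : ∀ a b c : ℂ,
      (a • P + b • (1 - P)) - (a • P + c • (1 - P)) = (b - c) • (1 - P) := by
    intro a b c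
    rw [sub_smul]
    abel
  have hdiff2 : ∀ a b c : ℂ,
      (a • P + c • (1 - P)) - (b • P + c • (1 - P)) = (a - b) • P := by
    intro a b c
    rw [sub_smul]
    abel
  -- main goal reduces to E = 0
  suffices hE0 : E = 0 by
    have hQR1 : Q + R = 1 := by
      have h' : (1 : H →L[ℂ] H) - (Q + R) = 0 := by
        rw [← hE0, hEdef]; abel
      have := sub_eq_zero.mp h'
      exact this.symm
    rw [← hψ10, ← hψ01]
    exact hQR1
  by_contra hEne
  obtain ⟨δ, hδpos, hδ⟩ := hUCψ 1 one_pos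
  set c1 : ℝ := ‖(1 : H →L[ℂ] H) - P‖ + 1 with hc1def
  have hc1pos : (0:ℝ) < c1 := by positivity
  set δ' : ℝ := δ / c1 with hδ'def
  have hδ'pos : 0 < δ' := div_pos hδpos hc1pos
  have keybound : ∀ b₀ : ℂ, ‖b₀ - 1‖ < δ' → ∀ a : ℂ, ‖ψ a b₀ - ψ a 1‖ < 1 := by
    intro b₀ hb₀ a
    apply hδ
    rw [hdiff1, norm_smul]
    calc ‖b₀ - 1‖ * ‖(1 : H →L[ℂ] H) - P‖ ≤ ‖b₀ - 1‖ * c1 := by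
          apply mul_le_mul_of_nonneg_left _ (norm_nonneg _)
          rw [hc1def]; linarith
      _ < δ' * c1 := by exact mul_lt_mul_of_pos_right hb₀ hc1pos
      _ = δ := by rw [hδ'def, div_mul_cancel₀ _ (ne_of_gt hc1pos)]
  by_cases hb : ∃ b₀ : ℂ, ‖b₀ - 1‖ < δ' ∧ g b₀ ≠ E
  · -- there is b₀ near 1 with g b₀ ≠ E : contradiction via unboundedness of f
    obtain ⟨b₀, hb₀near, hgb₀⟩ := hb
    set r : ℝ := ‖g b₀ - E‖ with hrdef
    have hrpos : 0 < r := norm_pos_iff.mpr (sub_ne_zero_of_ne hgb₀)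
    obtain ⟨δ₂, hδ₂pos, hδ₂⟩ := hUCψ r hrpos
    obtain ⟨n, hn⟩ := exists_nat_gt (‖P‖ / δ₂)
    set N : ℕ := n + 1 with hNdef
    have hNpos : (0:ℝ) < (N:ℝ) := by positivity
    have hNne : ((N:ℂ)) ≠ 0 := by
      have : N ≠ 0 := by omega
      exact Nat.cast_ne_zero.mpr this
    have hsmallf : ‖f ((N:ℂ))⁻¹‖ < r := by
      have hnorm : ‖((N:ℂ))⁻¹ • P + (1:ℂ) • (1 - P) - ((0:ℂ) • P + (1:ℂ) • (1 - P))‖ < δ₂ := by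
        rw [hdiff2, sub_zero, norm_smul, norm_inv]
        have hcast : ‖(N:ℂ)‖ = (N:ℝ) := by
          rw [show ((N:ℂ)) = ((N:ℝ):ℂ) by push_cast; ring, Complex.norm_real,
            Real.norm_eq_abs, abs_of_pos hNpos]
        rw [hcast]
        rw [inv_mul_lt_iff₀ hNpos]
        have : ‖P‖ / δ₂ < (N:ℝ) := by
          rw [hNdef]; push_cast; linarith
        calc ‖P‖ = (‖P‖ / δ₂) * δ₂ := by rw [div_mul_cancel₀ _ (ne_of_gt hδ₂pos)]
          _ < (N:ℝ) * δ₂ := by exact mul_lt_mul_of_pos_right this hδ₂pos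
      have hψn : ‖ψ ((N:ℂ))⁻¹ 1 - ψ 0 1‖ < r := hδ₂ _ _ _ _ hnorm
      have hfeq : f ((N:ℂ))⁻¹ = (ψ ((N:ℂ))⁻¹ 1 - ψ 0 1) * E := by
        simp only [hfdef]
        rw [sub_mul, ← hRdef, hRE, sub_zero]
      rw [hfeq]
      calc ‖(ψ ((N:ℂ))⁻¹ 1 - ψ 0 1) * E‖ ≤ ‖ψ ((N:ℂ))⁻¹ 1 - ψ 0 1‖ * ‖E‖ := norm_mul_le _ _
        _ ≤ ‖ψ ((N:ℂ))⁻¹ 1 - ψ 0 1‖ * 1 :=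
            mul_le_mul_of_nonneg_left hnE (norm_nonneg _)
        _ < r := by rw [mul_one]; exact hψn
    -- the chain
    have e1 : f ((N:ℂ))⁻¹ * f ((N:ℂ)) = E := by
      rw [hfmul, inv_mul_cancel₀ hNne, hf1]
    have e2 : f ((N:ℂ)) * (g b₀ - E) = (ψ (N:ℂ) b₀ - ψ (N:ℂ) 1) * E := by
      rw [mul_sub, hfg, sub_mul]
      congr 1
      simp only [hfdef]
      exact hXE _ _
    have e3 : E * (g b₀ - E) = g b₀ - E := by
      rw [mul_sub, hEE]
      congr 1
      simp only [hgdef]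
      exact hEX 1 b₀
    have key : g b₀ - E = f ((N:ℂ))⁻¹ * ((ψ (N:ℂ) b₀ - ψ (N:ℂ) 1) * E) := by
      calc g b₀ - E = E * (g b₀ - E) := e3.symm
        _ = (f ((N:ℂ))⁻¹ * f ((N:ℂ))) * (g b₀ - E) := by rw [e1]
        _ = f ((N:ℂ))⁻¹ * (f ((N:ℂ)) * (g b₀ - E)) := by rw [mul_assoc]
        _ = f ((N:ℂ))⁻¹ * ((ψ (N:ℂ) b₀ - ψ (N:ℂ) 1) * E) := by rw [e2]
    have habs : r < r := by
      calc r = ‖g b₀ - E‖ := hrdef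
        _ = ‖f ((N:ℂ))⁻¹ * ((ψ (N:ℂ) b₀ - ψ (N:ℂ) 1) * E)‖ := by rw [key]
        _ ≤ ‖f ((N:ℂ))⁻¹‖ * ‖(ψ (N:ℂ) b₀ - ψ (N:ℂ) 1) * E‖ := norm_mul_le _ _
        _ ≤ ‖f ((N:ℂ))⁻¹‖ * (‖ψ (N:ℂ) b₀ - ψ (N:ℂ) 1‖ * ‖E‖) := by
            apply mul_le_mul_of_nonneg_left (norm_mul_le _ _) (norm_nonneg _)
        _ ≤ ‖f ((N:ℂ))⁻¹‖ * 1 := by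
            apply mul_le_mul_of_nonneg_left _ (norm_nonneg _)
            have h2 := keybound b₀ hb₀near (N:ℂ)
            calc ‖ψ (N:ℂ) b₀ - ψ (N:ℂ) 1‖ * ‖E‖ ≤ 1 * 1 :=
                  mul_le_mul h2.le hnE (norm_nonneg _) zero_le_one
              _ = 1 := by norm_num
        _ < r := by rw [mul_one]; exact hsmallf
    exact absurd habs (lt_irrefl r)
  · -- g is constantly E near 1, hence E = g (1/M) is small : contradiction
    push_neg at hb
    have hEnorm : 0 < ‖E‖ := norm_pos_iff.mpr hEne
    obtain ⟨δ₃, hδ₃pos, hδ₃⟩ := hUCψ (‖E‖ / 2) (by positivity)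
    obtain ⟨m, hm⟩ := exists_nat_gt (‖(1 : H →L[ℂ] H) - P‖ / δ₃)
    set M : ℕ := m + 1 with hMdef
    have hMpos : (0:ℝ) < (M:ℝ) := by positivity
    -- smallness of g (1/M)
    have hgsmall : ‖g ((M:ℂ))⁻¹‖ < ‖E‖ / 2 := by
      have hnorm : ‖((1:ℂ) • P + ((M:ℂ))⁻¹ • (1 - P)) - ((1:ℂ) • P + (0:ℂ) • (1 - P))‖ < δ₃ := by
        rw [hdiff1, sub_zero, norm_smul, norm_inv]
        have hcast : ‖(M:ℂ)‖ = (M:ℝ) := by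
          rw [show ((M:ℂ)) = ((M:ℝ):ℂ) by push_cast; ring, Complex.norm_real,
            Real.norm_eq_abs, abs_of_pos hMpos]
        rw [hcast, inv_mul_lt_iff₀ hMpos]
        have : ‖(1 : H →L[ℂ] H) - P‖ / δ₃ < (M:ℝ) := by
          rw [hMdef]; push_cast; linarith
        calc ‖(1 : H →L[ℂ] H) - P‖ = (‖(1 : H →L[ℂ] H) - P‖ / δ₃) * δ₃ := by
              rw [div_mul_cancel₀ _ (ne_of_gt hδ₃pos)]
          _ < (M:ℝ) * δ₃ := mul_lt_mul_of_pos_right this hδ₃pos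
      have hψm' : ‖ψ 1 ((M:ℂ))⁻¹ - ψ 1 0‖ < ‖E‖ / 2 := hδ₃ _ _ _ _ hnorm
      have hgeq : g ((M:ℂ))⁻¹ = (ψ 1 ((M:ℂ))⁻¹ - ψ 1 0) * E := by
        simp only [hgdef]
        rw [sub_mul, ← hQdef, hQE, sub_zero]
      rw [hgeq]
      calc ‖(ψ 1 ((M:ℂ))⁻¹ - ψ 1 0) * E‖ ≤ ‖ψ 1 ((M:ℂ))⁻¹ - ψ 1 0‖ * ‖E‖ := norm_mul_le _ _
        _ ≤ ‖ψ 1 ((M:ℂ))⁻¹ - ψ 1 0‖ * 1 := mul_le_mul_of_nonneg_left hnE (norm_nonneg _)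
        _ < ‖E‖ / 2 := by rw [mul_one]; exact hψm'
    -- g (1/M) = E via roots
    have hgM : g ((M:ℂ))⁻¹ = E := by
      set x : ℝ := ((M:ℝ))⁻¹ with hxdef
      have hxpos : 0 < x := by positivity
      have htend : Filter.Tendsto (fun j : ℕ => Real.exp (Real.log x / ((j:ℝ) + 1)))
          Filter.atTop (nhds 1) := by
        have h1 : Filter.Tendsto (fun j : ℕ => Real.log x / ((j:ℝ) + 1))
            Filter.atTop (nhds 0) := by
          have h0 := (tendsto_const_div_atTop_nhds_zero_nat (Real.log x)).comp
            (Filter.tendsto_add_atTop_nat 1)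
          have heq : (fun j : ℕ => Real.log x / ((j:ℝ) + 1))
              = (fun n : ℕ => Real.log x / (n:ℝ)) ∘ (fun j : ℕ => j + 1) := by
            funext j
            simp only [Function.comp_apply]
            push_cast
            ring
          rw [heq]
          exact h0
        have h2 := (Real.continuous_exp.tendsto 0).comp h1
        simpa [Function.comp_def] using h2
      have hev := (Metric.tendsto_nhds.mp htend) δ' hδ'pos
      obtain ⟨j, hj⟩ := hev.exists
      set b : ℝ := Real.exp (Real.log x / ((j:ℝ) + 1)) with hbdef
      have hbpow : b ^ (j + 1) = x := by
        have hstep : b ^ (j + 1)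
            = Real.exp (((j + 1 : ℕ) : ℝ) * (Real.log x / ((j:ℝ) + 1))) := by
          rw [hbdef]
          exact (Real.exp_nat_mul _ _).symm
        rw [hstep, show ((j + 1 : ℕ) : ℝ) * (Real.log x / ((j:ℝ) + 1)) = Real.log x by
          push_cast; field_simp]
        exact Real.exp_log hxpos
      have hbnear : ‖((b:ℂ)) - 1‖ < δ' := by
        rw [show ((b:ℂ)) - 1 = (((b - 1 : ℝ)):ℂ) by push_cast; ring, Complex.norm_real]
        rw [Real.dist_eq] at hj
        rwa [Real.norm_eq_abs]
      have hcastpow : ((b:ℂ)) ^ (j + 1) = ((M:ℂ))⁻¹ := by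
        have : ((b:ℂ)) ^ (j + 1) = (((b ^ (j + 1) : ℝ)):ℂ) := by push_cast; ring
        rw [this, hbpow, hxdef]
        push_cast
        ring
      calc g ((M:ℂ))⁻¹ = g (((b:ℂ)) ^ (j + 1)) := by rw [hcastpow]
        _ = (g ((b:ℂ))) ^ (j + 1) := hgpow _ _
        _ = E ^ (j + 1) := by rw [hb ((b:ℂ)) hbnear]
        _ = E := hEpow _
    rw [hgM] at hgsmall
    linarith
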